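/- Let Z_i ∈ M_{k_i}(ℂ), W_i ∈ M_{k_i,k_{i+1}}(ℂ), Y_i ∈ M_{n_i,k_i}(ℂ), Ỹ_i ∈ M_{k_i,n_{i+1}}(ℂ) (for 1 ≤ i ≤ L, with W's for 1 ≤ i ≤ L−1) satisfy the constraints Z_iW_i − W_iZ_{i+1} = Ỹ_iY_{i+1}. Define φ_{ij}(z) = Y_i(z1−Z_i)⁻¹W_iW_{i+1}⋯W_{j−2}Ỹ_{j−1} for i < j (with the empty product of W's for j = i+1). Then for all i < j and all z where the resolvents are defined: Σ_{k=i+1}^{j−1} φ_{ik}(z)·φᵏʲ_inv(z) = −φ_{ij}(z) − φ_ij^inv(z), where φ_{ij}^inv(z) = −Y_iW_iW_{i+1}⋯W_{j−2}(z1−Z_{j−1})⁻¹Ỹ_{j−1}. -/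

import Mathlib

open Matrix

/-- The ordered product `W j * W (j+1) * ⋯ * W (i-1)` (equal to `1` when `i = j`,
and junk `0` when `j > i`). -/
noncomputable def Wprod (k : ℕ → ℕ)
    (W : ∀ i : ℕ, Matrix (Fin (k i)) (Fin (k (i + 1))) ℂ) (j : ℕ) :
    ∀ i : ℕ, Matrix (Fin (k j)) (Fin (k i)) ℂ
  | 0 => if h : j = 0 then by subst h; exact 1 else 0
  | (i + 1) => if h : j = i + 1 then by subst h; exact 1 else Wprod k W j i * W i

/-- `φ_{ij}(z) = Y_i (z·1 − Z_i)⁻¹ W_i ⋯ W_{j-2} Ỹ_{j-1}` (junk `0` for `j = 0`). -/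
noncomputable def phiF (k n : ℕ → ℕ)
    (Z : ∀ i : ℕ, Matrix (Fin (k i)) (Fin (k i)) ℂ)
    (Y : ∀ i : ℕ, Matrix (Fin (n i)) (Fin (k i)) ℂ)
    (Yt : ∀ i : ℕ, Matrix (Fin (k i)) (Fin (n (i + 1))) ℂ)
    (W : ∀ i : ℕ, Matrix (Fin (k i)) (Fin (k (i + 1))) ℂ)
    (z : ℂ) (i : ℕ) : ∀ j : ℕ, Matrix (Fin (n i)) (Fin (n j)) ℂ
  | 0 => 0
  | (j + 1) =>
      Y i * (z • (1 : Matrix (Fin (k i)) (Fin (k i)) ℂ) - Z i)⁻¹ * Wprod k W i j * Yt j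

/-- `φ^{inv}_{ij}(z) = −Y_i W_i ⋯ W_{j-2} (z·1 − Z_{j-1})⁻¹ Ỹ_{j-1}`
(junk `0` for `j = 0`). -/
noncomputable def phiInvF (k n : ℕ → ℕ)
    (Z : ∀ i : ℕ, Matrix (Fin (k i)) (Fin (k i)) ℂ)
    (Y : ∀ i : ℕ, Matrix (Fin (n i)) (Fin (k i)) ℂ)
    (Yt : ∀ i : ℕ, Matrix (Fin (k i)) (Fin (n (i + 1))) ℂ)
    (W : ∀ i : ℕ, Matrix (Fin (k i)) (Fin (k (i + 1))) ℂ)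
    (z : ℂ) (i : ℕ) : ∀ j : ℕ, Matrix (Fin (n i)) (Fin (n j)) ℂ
  | 0 => 0
  | (j + 1) =>
      -(Y i * Wprod k W i j *
        (z • (1 : Matrix (Fin (k j)) (Fin (k j)) ℂ) - Z j)⁻¹ * Yt j)

lemma Wprod_self (k : ℕ → ℕ) (W : ∀ i : ℕ, Matrix (Fin (k i)) (Fin (k (i + 1))) ℂ)
    (j : ℕ) : Wprod k W j j = 1 := by
  cases j with
  | zero => simp [Wprod]
  | succ m => simp [Wprod]

lemma Wprod_succ (k : ℕ → ℕ) (W : ∀ i : ℕ, Matrix (Fin (k i)) (Fin (k (i + 1))) ℂ)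
    {j p : ℕ} (h : j ≠ p + 1) : Wprod k W j (p + 1) = Wprod k W j p * W p := by
  simp [Wprod, h]

lemma Wprod_cons (k : ℕ → ℕ) (W : ∀ i : ℕ, Matrix (Fin (k i)) (Fin (k (i + 1))) ℂ)
    {p : ℕ} : ∀ q : ℕ, p < q → W p * Wprod k W (p + 1) q = Wprod k W p q := by
  intro q
  induction q with
  | zero => omega
  | succ q ih =>
    intro hq
    rcases Nat.lt_or_ge p q with h | h
    · rw [Wprod_succ k W (by omega : p + 1 ≠ q + 1), Wprod_succ k W (by omega : p ≠ q + 1),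
        ← Matrix.mul_assoc, ih h]
    · have : p = q := by omega
      subst this
      rw [Wprod_self, Wprod_succ k W (by omega : p ≠ p + 1), Wprod_self, Matrix.mul_one,
        Matrix.one_mul]

lemma tel_sum {M : Type*} [AddCommGroup M] (f : ℕ → M) (a : ℕ) :
    ∀ b, a ≤ b → ∑ p ∈ Finset.Ico a b, (f p - f (p + 1)) = f a - f b := by
  intro b
  induction b with
  | zero => intro h; interval_cases a; simp
  | succ b ih =>
    intro h
    rcases Nat.lt_or_ge a (b + 1) with h' | h'
    · have hab : a ≤ b := by omega
      rw [Finset.sum_Ico_succ_top hab, ih hab]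
      abel
    · have : a = b + 1 := by omega
      subst this; simp

/-- Telescoping identity for the half-ADHM instanton solutions:
`Σ_{m=i+1}^{j-1} φ_{im}(z) φ^{inv}_{mj}(z) = −φ_{ij}(z) − φ^{inv}_{ij}(z)` whenever
the constraints `Z_m W_m − W_m Z_{m+1} = Ỹ_m Y_{m+1}` hold and the resolvents are
defined at `z`. -/
theorem telescoping_identity (k n : ℕ → ℕ)
    (Z : ∀ i : ℕ, Matrix (Fin (k i)) (Fin (k i)) ℂ)
    (Y : ∀ i : ℕ, Matrix (Fin (n i)) (Fin (k i)) ℂ)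
    (Yt : ∀ i : ℕ, Matrix (Fin (k i)) (Fin (n (i + 1))) ℂ)
    (W : ∀ i : ℕ, Matrix (Fin (k i)) (Fin (k (i + 1))) ℂ)
    (i j : ℕ) (hij : i < j) (z : ℂ)
    (hcon : ∀ m, i ≤ m → m + 2 ≤ j → Z m * W m - W m * Z (m + 1) = Yt m * Y (m + 1))
    (hres : ∀ m, i ≤ m → m < j →
      IsUnit (z • (1 : Matrix (Fin (k m)) (Fin (k m)) ℂ) - Z m)) :
    ∑ m ∈ Finset.Ioo i j, phiF k n Z Y Yt W z i m * phiInvF k n Z Y Yt W z m j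
      = -(phiF k n Z Y Yt W z i j) - phiInvF k n Z Y Yt W z i j := by
  obtain ⟨q, rfl⟩ : ∃ q, j = q + 1 := ⟨j - 1, by omega⟩
  have hiq : i ≤ q := by omega
  set A : ∀ m : ℕ, Matrix (Fin (k m)) (Fin (k m)) ℂ :=
    fun m => (z • (1 : Matrix (Fin (k m)) (Fin (k m)) ℂ) - Z m)⁻¹ with hA
  set B : ∀ m : ℕ, Matrix (Fin (k m)) (Fin (k m)) ℂ :=
    fun m => z • (1 : Matrix (Fin (k m)) (Fin (k m)) ℂ) - Z m with hB
  have hAB : ∀ m, i ≤ m → m < q + 1 → A m * B m = 1 := fun m h1 h2 =>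
    Matrix.nonsing_inv_mul _ ((Matrix.isUnit_iff_isUnit_det _).mp (hres m h1 h2))
  have hBA : ∀ m, i ≤ m → m < q + 1 → B m * A m = 1 := fun m h1 h2 =>
    Matrix.mul_nonsing_inv _ ((Matrix.isUnit_iff_isUnit_det _).mp (hres m h1 h2))
  set T : ℕ → Matrix (Fin (n i)) (Fin (n (q + 1))) ℂ :=
    fun p => Y i * A i * Wprod k W i p * B p * Wprod k W p q * A q * Yt q with hT
  have key : ∀ p, i ≤ p → p < q →
      phiF k n Z Y Yt W z i (p + 1) * phiInvF k n Z Y Yt W z (p + 1) (q + 1)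
        = T p - T (p + 1) := by
    intro p hip hpq
    have hc : Yt p * Y (p + 1) = W p * B (p + 1) - B p * W p := by
      rw [← hcon p hip (by omega)]
      simp [hB, Matrix.sub_mul, Matrix.mul_sub, smul_mul_assoc, Matrix.mul_smul]
    have e1 : Wprod k W i p * W p = Wprod k W i (p + 1) :=
      (Wprod_succ k W (by omega : i ≠ p + 1)).symm
    have e2 : W p * Wprod k W (p + 1) q = Wprod k W p q := Wprod_cons k W q hpq
    show (Y i * A i * Wprod k W i p * Yt p) *
        (-(Y (p + 1) * Wprod k W (p + 1) q * A q * Yt q)) = T p - T (p + 1)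
    have expand : (Y i * A i * Wprod k W i p * Yt p) *
        (Y (p + 1) * Wprod k W (p + 1) q * A q * Yt q)
        = Y i * A i * Wprod k W i p * (Yt p * Y (p + 1)) *
            Wprod k W (p + 1) q * A q * Yt q := by
      simp only [Matrix.mul_assoc]
    rw [Matrix.mul_neg, expand, hc]
    have expand2 : Y i * A i * Wprod k W i p * (W p * B (p + 1) - B p * W p) *
        Wprod k W (p + 1) q * A q * Yt q
        = (Y i * A i * (Wprod k W i p * W p) * B (p + 1) * Wprod k W (p + 1) q * A q * Yt q)
          - (Y i * A i * Wprod k W i p * B p * (W p * Wprod k W (p + 1) q) * A q * Yt q) := by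
      simp only [Matrix.mul_sub, Matrix.sub_mul, Matrix.mul_assoc]
    rw [expand2, e1, e2, neg_sub]
  have hsum : ∑ m ∈ Finset.Ioo i (q + 1),
      phiF k n Z Y Yt W z i m * phiInvF k n Z Y Yt W z m (q + 1)
      = ∑ p ∈ Finset.Ico i q, (T p - T (p + 1)) := by
    rw [← Finset.Ico_add_one_left_eq_Ioo, show Finset.Ico (i + 1) (q + 1)
      = (Finset.Ico i q).map (addRightEmbedding 1) from (Finset.map_add_right_Ico i q 1).symm,
      Finset.sum_map]
    exact Finset.sum_congr rfl fun p hp => by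
      have := Finset.mem_Ico.mp hp
      exact key p this.1 this.2
  rw [hsum, tel_sum T i q hiq]
  have hTq : T q = phiF k n Z Y Yt W z i (q + 1) := by
    show Y i * A i * Wprod k W i q * B q * Wprod k W q q * A q * Yt q
      = Y i * A i * Wprod k W i q * Yt q
    rw [Wprod_self, Matrix.mul_one]
    calc Y i * A i * Wprod k W i q * B q * A q * Yt q
        = Y i * A i * Wprod k W i q * (B q * A q) * Yt q := by
          simp only [Matrix.mul_assoc]
      _ = Y i * A i * Wprod k W i q * Yt q := by
          rw [hBA q hiq (by omega), Matrix.mul_one]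
  have hTi : T i = -phiInvF k n Z Y Yt W z i (q + 1) := by
    show Y i * A i * Wprod k W i i * B i * Wprod k W i q * A q * Yt q
      = -(-(Y i * Wprod k W i q * A q * Yt q))
    rw [neg_neg, Wprod_self, Matrix.mul_one]
    calc Y i * A i * B i * Wprod k W i q * A q * Yt q
        = Y i * (A i * B i) * Wprod k W i q * A q * Yt q := by
          simp only [Matrix.mul_assoc]
      _ = Y i * Wprod k W i q * A q * Yt q := by
          rw [hAB i le_rfl (by omega), Matrix.mul_one]
  rw [hTi, hTq]
  abel
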